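/- arXiv:2509.09383 — 4 statements merged into one kernel-verified Lean document; each statement's English description precedes it below -/
import Mathlib

section
/- Let K be a field of characteristic 3, n ≥ 3, and let W ⊆ K[z_I : I ∈ A(n,2)]₂ be the K-span of the quadrics Q(s,t) := φ(s²)φ(t²) − φ(st)² as s,t range over all linear forms in K[x₀,…,x_n], where φ : K[x]₂ → K-span of {z_I} is the linear isomorphism sending the monomial x^I to z_I. Then dim_K W = n(n+1)(n²+9n+2)/24. -/
open MvPolynomial

noncomputable def PPol (K : Type*) [Field K] (n : ℕ) (s t : Fin (n + 1) → K) :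
    MvPolynomial (Sym2 (Fin (n + 1))) K :=
  ∑ i, ∑ j, C (s i * t j) * X (Sym2.mk i j)

/-- The rank-3 quadric `Q(s,t) = φ(s²)φ(t²) − φ(st)²` associated to the linear forms
`s = Σ sᵢxᵢ`, `t = Σ tᵢxᵢ`, where `φ` sends the degree-2 monomial `xᵢxⱼ` to the
variable `z_{ij}` (variables indexed by unordered pairs, i.e. by `A(n,2)`):
`φ(s²) = Σ_{i,j} sᵢsⱼ z_{ij}`, `φ(st) = Σ_{i,j} sᵢtⱼ z_{ij}`. -/
noncomputable def Qst (K : Type*) [Field K] (n : ℕ) (s t : Fin (n + 1) → K) :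
    MvPolynomial (Sym2 (Fin (n + 1))) K :=
  (∑ i, ∑ j, C (s i * s j) * X (Sym2.mk i j)) *
      (∑ i, ∑ j, C (t i * t j) * X (Sym2.mk i j)) -
    (∑ i, ∑ j, C (s i * t j) * X (Sym2.mk i j)) ^ 2

section Algebra
variable (K : Type*) [Field K] (n : ℕ)

theorem Qst_eq (s t : Fin (n + 1) → K) :
    Qst K n s t = PPol K n s s * PPol K n t t - PPol K n s t ^ 2 := rfl

noncomputable def Sq (a b c d : Fin (n + 1)) : MvPolynomial (Sym2 (Fin (n + 1))) K :=
  X (Sym2.mk a b) * X (Sym2.mk c d) + X (Sym2.mk a c) * X (Sym2.mk b d) +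
    X (Sym2.mk a d) * X (Sym2.mk b c)

theorem Xswap (a b : Fin (n + 1)) :
    (X (Sym2.mk a b) : MvPolynomial (Sym2 (Fin (n + 1))) K) = X (Sym2.mk b a) := by
  rw [Sym2.eq_swap]

theorem threeZ (σ : Type*) [CharP K 3] : (3 : MvPolynomial σ K) = 0 := by
  have : ((3 : ℕ) : MvPolynomial σ K) = 0 := by
    rw [← C_eq_coe_nat, CharP.cast_eq_zero K 3]; simp
  simpa using this

theorem PPol_mul (s t u v : Fin (n + 1) → K) :
    PPol K n u v * PPol K n s t =
      ∑ a, ∑ b, ∑ c, ∑ d, C (s a * t b * (u c * v d)) *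
        (X (Sym2.mk a b) * X (Sym2.mk c d)) := by
  rw [PPol, PPol]
  simp only [Finset.sum_mul, Finset.mul_sum]
  refine Finset.sum_congr rfl fun a _ => Finset.sum_congr rfl fun b _ =>
    Finset.sum_congr rfl fun c _ => Finset.sum_congr rfl fun d _ => ?_
  simp only [map_mul]
  ring

theorem PPol_single (i k : Fin (n + 1)) :
    PPol K n (Pi.single i 1) (Pi.single k 1) = X (Sym2.mk i k) := by
  rw [PPol]
  simp [Pi.single_apply, ite_mul, mul_ite, apply_ite C, Finset.sum_ite_eq]

theorem PPol_add_right (s t u : Fin (n + 1) → K) :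
    PPol K n s (t + u) = PPol K n s t + PPol K n s u := by
  simp [PPol, mul_add, map_add, add_mul, Finset.sum_add_distrib]

theorem PPol_add_left (s t u : Fin (n + 1) → K) :
    PPol K n (s + t) u = PPol K n s u + PPol K n t u := by
  simp [PPol, add_mul, map_add, Finset.sum_add_distrib]

variable [CharP K 3]

theorem Qst_master (s t : Fin (n + 1) → K) :
    Qst K n s t =
      ∑ a, ∑ b, ∑ c, ∑ d, C (s a * s b * (t c * t d)) * Sq K n a b c d := by
  have hT1 : (∑ a, ∑ b, ∑ c, ∑ d, C (s a * s b * (t c * t d)) *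
      (X (Sym2.mk a b) * X (Sym2.mk c d)) : MvPolynomial (Sym2 (Fin (n+1))) K) =
      PPol K n t t * PPol K n s s := (PPol_mul K n s s t t).symm
  have hT2 : (∑ a, ∑ b, ∑ c, ∑ d, C (s a * s b * (t c * t d)) *
      (X (Sym2.mk a c) * X (Sym2.mk b d)) : MvPolynomial (Sym2 (Fin (n+1))) K) =
      PPol K n s t * PPol K n s t := by
    rw [PPol_mul K n s t s t]
    refine Finset.sum_congr rfl fun a _ => ?_
    rw [Finset.sum_comm]
    refine Finset.sum_congr rfl fun c _ => Finset.sum_congr rfl fun b _ =>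
      Finset.sum_congr rfl fun d _ => ?_
    congr 1
    ring
  have hT3 : (∑ a, ∑ b, ∑ c, ∑ d, C (s a * s b * (t c * t d)) *
      (X (Sym2.mk a d) * X (Sym2.mk b c)) : MvPolynomial (Sym2 (Fin (n+1))) K) =
      PPol K n s t * PPol K n s t := by
    rw [PPol_mul K n s t s t]
    refine Finset.sum_congr rfl fun a _ => ?_
    calc ∑ b, ∑ c, ∑ d, C (s a * s b * (t c * t d)) *
          (X (Sym2.mk a d) * X (Sym2.mk b c))
        = ∑ b, ∑ d, ∑ c, C (s a * s b * (t c * t d)) *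
          (X (Sym2.mk a d) * X (Sym2.mk b c)) :=
          Finset.sum_congr rfl fun b _ => Finset.sum_comm
      _ = ∑ d, ∑ b, ∑ c, C (s a * s b * (t c * t d)) *
          (X (Sym2.mk a d) * X (Sym2.mk b c)) := Finset.sum_comm
      _ = ∑ b, ∑ c, ∑ d, C (s a * t b * (s c * t d)) *
          (X (Sym2.mk a b) * X (Sym2.mk c d)) := by
          refine Finset.sum_congr rfl fun x _ => Finset.sum_congr rfl fun y _ =>
            Finset.sum_congr rfl fun z _ => ?_
          congr 1
          ring
  calc Qst K n s t = PPol K n s s * PPol K n t t - PPol K n s t ^ 2 := rfl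
    _ = ∑ a, ∑ b, ∑ c, ∑ d, C (s a * s b * (t c * t d)) * Sq K n a b c d := by
        simp only [Sq, mul_add, Finset.sum_add_distrib]
        rw [hT1, hT2, hT3]
        linear_combination (-(PPol K n s t * PPol K n s t)) * threeZ K (Sym2 (Fin (n+1)))

theorem Sq_eq2 (i k l : Fin (n + 1)) :
    Sq K n i i k l = (2 : K) • Qst K n (Pi.single i 1) (Pi.single k 1 + Pi.single l 1)
      - (2 : K) • Qst K n (Pi.single i 1) (Pi.single k 1)
      - (2 : K) • Qst K n (Pi.single i 1) (Pi.single l 1) := by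
  simp only [Qst_eq, PPol_add_right, PPol_add_left, PPol_single]
  rw [Xswap K n l k]
  simp only [Sq, smul_eq_C_mul]
  have h2 : (C (2:K) : MvPolynomial (Sym2 (Fin (n + 1))) K) = 2 := map_ofNat C 2
  rw [h2]
  linear_combination (2 * (X (Sym2.mk i k) * X (Sym2.mk i l)) -
      X (Sym2.mk i i) * X (Sym2.mk k l) :
    MvPolynomial (Sym2 (Fin (n + 1))) K) * threeZ K (Sym2 (Fin (n + 1)))

theorem Sq_comb (a b c d : Fin (n + 1)) :
    Sq K n a b c d =
      Qst K n (Pi.single a 1 + Pi.single b 1) (Pi.single c 1 + Pi.single d 1)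
      - (Sq K n a a c c + Sq K n a a d d + Sq K n b b c c + Sq K n b b d d)
      - (2 : K) • (Sq K n a a c d + Sq K n b b c d + Sq K n c c a b + Sq K n d d a b) := by
  simp only [Qst_eq, PPol_add_right, PPol_add_left, PPol_single]
  simp only [Sq, smul_eq_C_mul]
  rw [Xswap K n c a, Xswap K n c b, Xswap K n d a, Xswap K n d b, Xswap K n b a, Xswap K n d c]
  rw [show (C (2:K) : MvPolynomial (Sym2 (Fin (n + 1))) K) = 2 from map_ofNat C 2]
  linear_combination (-(X (Sym2.mk a b) * X (Sym2.mk c d) + X (Sym2.mk a c) * X (Sym2.mk b d) +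
    X (Sym2.mk a d) * X (Sym2.mk b c)) +
    (X (Sym2.mk a c) + X (Sym2.mk b d) + X (Sym2.mk a d) + X (Sym2.mk b c)) ^ 2 :
    MvPolynomial (Sym2 (Fin (n + 1))) K) * threeZ K (Sym2 (Fin (n + 1)))

theorem Sq_aaad (a d : Fin (n + 1)) : Sq K n a a a d = 0 := by
  simp only [Sq]
  linear_combination (X (Sym2.mk a a) * X (Sym2.mk a d) :
    MvPolynomial (Sym2 (Fin (n + 1))) K) * threeZ K (Sym2 (Fin (n + 1)))

theorem Sq_abbb (a b : Fin (n + 1)) : Sq K n a b b b = 0 := by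
  simp only [Sq]
  linear_combination (X (Sym2.mk a b) * X (Sym2.mk b b) :
    MvPolynomial (Sym2 (Fin (n + 1))) K) * threeZ K (Sym2 (Fin (n + 1)))

end Algebra

section Perm
variable (K : Type*) [Field K] (n : ℕ)

theorem Sq_perm01 (a b c d : Fin (n+1)) : Sq K n b a c d = Sq K n a b c d := by
  simp only [Sq]; rw [Xswap K n b a]; ring

theorem Sq_perm23 (a b c d : Fin (n+1)) : Sq K n a b d c = Sq K n a b c d := by
  simp only [Sq]; rw [Xswap K n d c]; ring

theorem Sq_perm12 (a b c d : Fin (n+1)) : Sq K n a c b d = Sq K n a b c d := by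
  simp only [Sq]; rw [Xswap K n c b]; ring

theorem Sq_perm02 (a b c d : Fin (n+1)) : Sq K n c b a d = Sq K n a b c d := by
  simp only [Sq]; rw [Xswap K n c b, Xswap K n c a, Xswap K n b a]; ring

theorem Sq_perm03 (a b c d : Fin (n+1)) : Sq K n d b c a = Sq K n a b c d := by
  simp only [Sq]; rw [Xswap K n d b, Xswap K n c a, Xswap K n d c, Xswap K n b a, Xswap K n d a]; ring

theorem Sq_perm13 (a b c d : Fin (n+1)) : Sq K n a d c b = Sq K n a b c d := by
  simp only [Sq]; rw [Xswap K n c b, Xswap K n d b, Xswap K n d c]; ring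

noncomputable def Sqf (f : Fin 4 → Fin (n + 1)) : MvPolynomial (Sym2 (Fin (n + 1))) K :=
  Sq K n (f 0) (f 1) (f 2) (f 3)

theorem Sqf_swap (x y : Fin 4) (f : Fin 4 → Fin (n + 1)) :
    Sqf K n (f ∘ Equiv.swap x y) = Sqf K n f := by
  have key : ∀ i₀ i₁ i₂ i₃ : Fin 4, Equiv.swap x y 0 = i₀ → Equiv.swap x y 1 = i₁ →
      Equiv.swap x y 2 = i₂ → Equiv.swap x y 3 = i₃ →
      Sqf K n (f ∘ Equiv.swap x y) = Sq K n (f i₀) (f i₁) (f i₂) (f i₃) := by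
    intro i₀ i₁ i₂ i₃ h0 h1 h2 h3
    rw [show Sqf K n (f ∘ Equiv.swap x y) = Sq K n (f (Equiv.swap x y 0)) (f (Equiv.swap x y 1))
      (f (Equiv.swap x y 2)) (f (Equiv.swap x y 3)) from rfl, h0, h1, h2, h3]
  fin_cases x <;> fin_cases y <;>
    first
      | exact key 0 1 2 3 (by decide) (by decide) (by decide) (by decide)
      | (refine Eq.trans (key _ _ _ _ ?_ ?_ ?_ ?_) (Sq_perm01 K n (f 0) (f 1) (f 2) (f 3)) <;> decide)
      | (refine Eq.trans (key _ _ _ _ ?_ ?_ ?_ ?_) (Sq_perm23 K n (f 0) (f 1) (f 2) (f 3)) <;> decide)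
      | (refine Eq.trans (key _ _ _ _ ?_ ?_ ?_ ?_) (Sq_perm12 K n (f 0) (f 1) (f 2) (f 3)) <;> decide)
      | (refine Eq.trans (key _ _ _ _ ?_ ?_ ?_ ?_) (Sq_perm02 K n (f 0) (f 1) (f 2) (f 3)) <;> decide)
      | (refine Eq.trans (key _ _ _ _ ?_ ?_ ?_ ?_) (Sq_perm03 K n (f 0) (f 1) (f 2) (f 3)) <;> decide)
      | (refine Eq.trans (key _ _ _ _ ?_ ?_ ?_ ?_) (Sq_perm13 K n (f 0) (f 1) (f 2) (f 3)) <;> decide)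

theorem Sqf_perm (σ : Equiv.Perm (Fin 4)) : ∀ f : Fin 4 → Fin (n + 1),
    Sqf K n (f ∘ σ) = Sqf K n f := by
  refine Equiv.Perm.swap_induction_on σ (fun f => by simp) (fun σ' x y hxy ih f => ?_)
  have hc : f ∘ ⇑(Equiv.swap x y * σ') = (f ∘ ⇑(Equiv.swap x y)) ∘ ⇑σ' := rfl
  rw [hc, ih, Sqf_swap]

end Perm

def dupMap : Fin 3 → Fin 4 → Fin 3 := ![![0,0,1,2], ![0,1,1,2], ![0,1,2,2]]
def dup2 : Fin 4 → Fin 2 := ![0,0,1,1]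

abbrev tupIdx (N : ℕ) :=
  ({s : Finset (Fin N) // s.card = 4}) ⊕ (({s : Finset (Fin N) // s.card = 3}) × Fin 3) ⊕
    ({s : Finset (Fin N) // s.card = 2})

def tup {N : ℕ} : tupIdx N → (Fin 4 → Fin N)
  | .inl s => fun m => s.1.orderEmbOfFin s.2 m
  | .inr (.inl (s, j)) => fun m => s.1.orderEmbOfFin s.2 (dupMap j m)
  | .inr (.inr s) => fun m => s.1.orderEmbOfFin s.2 (dup2 m)

def Adm {N : ℕ} (f : Fin 4 → Fin N) : Prop :=
  f 0 ≤ f 1 ∧ f 1 ≤ f 2 ∧ f 2 ≤ f 3 ∧ f 0 ≠ f 2 ∧ f 1 ≠ f 3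

theorem tup_adm {N : ℕ} (i : tupIdx N) : Adm (tup i) := by
  rcases i with s | ⟨s, j⟩ | s
  · have he := (s.1.orderEmbOfFin s.2).strictMono
    exact ⟨(he (by decide)).le, (he (by decide)).le, (he (by decide)).le,
      (he (by decide)).ne, (he (by decide)).ne⟩
  · have he := (s.1.orderEmbOfFin s.2).strictMono
    have hm : Monotone (dupMap j) := by fin_cases j <;> decide
    exact ⟨he.monotone (hm (by decide)), he.monotone (hm (by decide)),
      he.monotone (hm (by decide)),
      (he (show dupMap j 0 < dupMap j 2 by fin_cases j <;> decide)).ne,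
      (he (show dupMap j 1 < dupMap j 3 by fin_cases j <;> decide)).ne⟩
  · have he := (s.1.orderEmbOfFin s.2).strictMono
    have hm : Monotone dup2 := by decide
    exact ⟨he.monotone (hm (by decide)), he.monotone (hm (by decide)),
      he.monotone (hm (by decide)),
      (he (show dup2 0 < dup2 2 by decide)).ne,
      (he (show dup2 1 < dup2 3 by decide)).ne⟩

theorem tup_mk4 {N : ℕ} (u : Fin 4 → Fin N) (hsm : StrictMono u) :
    tup (Sum.inl ⟨Finset.univ.map ⟨u, hsm.injective⟩, by simp⟩) = u := by
  funext m
  show (Finset.univ.map ⟨u, hsm.injective⟩).orderEmbOfFin _ m = u m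
  rw [← Finset.orderEmbOfFin_unique (f := u) _ (fun x => by simp) hsm]

theorem tup_mk3 {N : ℕ} (u : Fin 3 → Fin N) (hsm : StrictMono u) (j : Fin 3) :
    tup (Sum.inr (Sum.inl (⟨Finset.univ.map ⟨u, hsm.injective⟩, by simp⟩, j))) =
      fun m => u (dupMap j m) := by
  funext m
  show (Finset.univ.map ⟨u, hsm.injective⟩).orderEmbOfFin _ (dupMap j m) = u (dupMap j m)
  rw [← Finset.orderEmbOfFin_unique (f := u) _ (fun x => by simp) hsm]

theorem tup_mk2 {N : ℕ} (u : Fin 2 → Fin N) (hsm : StrictMono u) :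
    tup (Sum.inr (Sum.inr ⟨Finset.univ.map ⟨u, hsm.injective⟩, by simp⟩)) =
      fun m => u (dup2 m) := by
  funext m
  show (Finset.univ.map ⟨u, hsm.injective⟩).orderEmbOfFin _ (dup2 m) = u (dup2 m)
  rw [← Finset.orderEmbOfFin_unique (f := u) _ (fun x => by simp) hsm]

theorem sm2 {N : ℕ} (a b : Fin N) (h : a < b) : StrictMono ![a, b] := by
  intro x y hxy
  fin_cases x <;> fin_cases y <;> simp_all <;> omega

theorem sm3 {N : ℕ} (a b c : Fin N) (h1 : a < b) (h2 : b < c) : StrictMono ![a, b, c] := by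
  intro x y hxy
  fin_cases x <;> fin_cases y <;> simp_all <;> omega

theorem sm4 {N : ℕ} (g : Fin 4 → Fin N) (h1 : g 0 < g 1) (h2 : g 1 < g 2) (h3 : g 2 < g 3) :
    StrictMono g := by
  intro x y hxy
  fin_cases x <;> fin_cases y <;> simp_all <;> omega

theorem tup_surj {N : ℕ} (g : Fin 4 → Fin N) (hg : Adm g) : ∃ i, tup i = g := by
  obtain ⟨h01, h12, h23, h02, h13⟩ := hg
  by_cases e01 : g 0 = g 1 <;> by_cases e12 : g 1 = g 2 <;> by_cases e23 : g 2 = g 3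
  · omega
  · omega
  · -- g0=g1, g1<g2, g2=g3 : 2-set
    refine ⟨_, (tup_mk2 ![g 0, g 2] (sm2 _ _ (by omega))).trans ?_⟩
    funext m
    fin_cases m <;> simp [dup2, Matrix.cons_val_two, Matrix.cons_val_three, Matrix.tail_cons, Matrix.vecHead, Matrix.vecTail] <;> omega
  · -- g0=g1, rest strict : j = 0
    refine ⟨_, (tup_mk3 ![g 0, g 2, g 3] (sm3 _ _ _ (by omega) (by omega)) 0).trans ?_⟩
    funext m
    fin_cases m <;> simp [dupMap, Matrix.cons_val_two, Matrix.cons_val_three, Matrix.tail_cons, Matrix.vecHead, Matrix.vecTail] <;> omega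
  · omega
  · -- g1=g2 strict sides : j = 1
    refine ⟨_, (tup_mk3 ![g 0, g 1, g 3] (sm3 _ _ _ (by omega) (by omega)) 1).trans ?_⟩
    funext m
    fin_cases m <;> simp [dupMap, Matrix.cons_val_two, Matrix.cons_val_three, Matrix.tail_cons, Matrix.vecHead, Matrix.vecTail] <;> omega
  · -- g2=g3 : j = 2
    refine ⟨_, (tup_mk3 ![g 0, g 1, g 2] (sm3 _ _ _ (by omega) (by omega)) 2).trans ?_⟩
    funext m
    fin_cases m <;> simp [dupMap, Matrix.cons_val_two, Matrix.cons_val_three, Matrix.tail_cons, Matrix.vecHead, Matrix.vecTail] <;> omega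
  · -- all strict
    exact ⟨_, tup_mk4 g (sm4 g (by omega) (by omega) (by omega))⟩

theorem image_emb {N k : ℕ} (s : Finset (Fin N)) (h : s.card = k) :
    Finset.univ.image ⇑(s.orderEmbOfFin h) = s := by
  apply Finset.coe_injective
  rw [Finset.coe_image, Finset.coe_univ, Set.image_univ, Finset.range_orderEmbOfFin]

theorem image_tup_inl {N : ℕ} (s : {s : Finset (Fin N) // s.card = 4}) :
    Finset.univ.image (tup (Sum.inl s)) = s.1 := image_emb s.1 s.2

theorem image_tup_mid {N : ℕ} (s : {s : Finset (Fin N) // s.card = 3}) (j : Fin 3) :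
    Finset.univ.image (tup (Sum.inr (Sum.inl (s, j)))) = s.1 := by
  show Finset.univ.image (⇑(s.1.orderEmbOfFin s.2) ∘ dupMap j) = s.1
  rw [← Finset.image_image]
  rw [show Finset.univ.image (dupMap j) = Finset.univ from by fin_cases j <;> decide]
  exact image_emb s.1 s.2

theorem image_tup_inr {N : ℕ} (s : {s : Finset (Fin N) // s.card = 2}) :
    Finset.univ.image (tup (Sum.inr (Sum.inr s))) = s.1 := by
  show Finset.univ.image (⇑(s.1.orderEmbOfFin s.2) ∘ dup2) = s.1
  rw [← Finset.image_image]
  rw [show Finset.univ.image dup2 = Finset.univ from by decide]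
  exact image_emb s.1 s.2

theorem tup_pat_inl {N : ℕ} (s : {s : Finset (Fin N) // s.card = 4}) :
    tup (Sum.inl s) 0 ≠ tup (Sum.inl s) 1 ∧ tup (Sum.inl s) 1 ≠ tup (Sum.inl s) 2 ∧
      tup (Sum.inl s) 2 ≠ tup (Sum.inl s) 3 := by
  have he := (s.1.orderEmbOfFin s.2).strictMono
  exact ⟨(he (by decide)).ne, (he (by decide)).ne, (he (by decide)).ne⟩

theorem tup_pat_mid {N : ℕ} (s : {s : Finset (Fin N) // s.card = 3}) (j : Fin 3) :
    ((tup (Sum.inr (Sum.inl (s, j))) 0 = tup (Sum.inr (Sum.inl (s, j))) 1) ↔ j = 0) ∧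
    ((tup (Sum.inr (Sum.inl (s, j))) 1 = tup (Sum.inr (Sum.inl (s, j))) 2) ↔ j = 1) ∧
    ((tup (Sum.inr (Sum.inl (s, j))) 2 = tup (Sum.inr (Sum.inl (s, j))) 3) ↔ j = 2) := by
  have hinj := (s.1.orderEmbOfFin s.2).injective
  refine ⟨?_, ?_, ?_⟩ <;>
    · show (s.1.orderEmbOfFin s.2 _ = s.1.orderEmbOfFin s.2 _) ↔ _
      rw [hinj.eq_iff]
      fin_cases j <;> decide

theorem tup_pat_inr {N : ℕ} (s : {s : Finset (Fin N) // s.card = 2}) :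
    tup (Sum.inr (Sum.inr s)) 0 = tup (Sum.inr (Sum.inr s)) 1 ∧
    tup (Sum.inr (Sum.inr s)) 1 ≠ tup (Sum.inr (Sum.inr s)) 2 ∧
    tup (Sum.inr (Sum.inr s)) 2 = tup (Sum.inr (Sum.inr s)) 3 := by
  have he := (s.1.orderEmbOfFin s.2).strictMono
  refine ⟨?_, (he (by decide)).ne, ?_⟩ <;>
    · show s.1.orderEmbOfFin s.2 _ = s.1.orderEmbOfFin s.2 _
      exact congrArg _ (by decide)

theorem tup_inj {N : ℕ} : Function.Injective (tup (N := N)) := by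
  intro i i' h
  have himg : Finset.univ.image (tup i) = Finset.univ.image (tup i') := by rw [h]
  have c0 := congrFun h 0
  have c1 := congrFun h 1
  have c2 := congrFun h 2
  have c3 := congrFun h 3
  rcases i with s | ⟨s, j⟩ | s <;> rcases i' with s' | ⟨s', j'⟩ | s'
  · rw [image_tup_inl, image_tup_inl] at himg
    rw [Subtype.ext himg]
  · obtain ⟨p1, p2, p3⟩ := tup_pat_inl s
    obtain ⟨q1, q2, q3⟩ := tup_pat_mid s' j'
    fin_cases j' <;>
      [exact absurd (c0.trans ((q1.2 rfl).trans c1.symm)) p1;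
       exact absurd (c1.trans ((q2.2 rfl).trans c2.symm)) p2;
       exact absurd (c2.trans ((q3.2 rfl).trans c3.symm)) p3]
  · obtain ⟨p1, p2, p3⟩ := tup_pat_inl s
    obtain ⟨q1, q2, q3⟩ := tup_pat_inr s'
    exact absurd (c0.trans (q1.trans c1.symm)) p1
  · obtain ⟨p1, p2, p3⟩ := tup_pat_mid s j
    obtain ⟨q1, q2, q3⟩ := tup_pat_inl s'
    fin_cases j <;>
      [exact absurd ((c0.symm.trans (p1.2 rfl)).trans c1) q1;
       exact absurd ((c1.symm.trans (p2.2 rfl)).trans c2) q2;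
       exact absurd ((c2.symm.trans (p3.2 rfl)).trans c3) q3]
  · rw [image_tup_mid, image_tup_mid] at himg
    obtain ⟨p1, p2, p3⟩ := tup_pat_mid s j
    obtain ⟨q1, q2, q3⟩ := tup_pat_mid s' j'
    have h0 : (j = 0) ↔ (j' = 0) := by rw [← p1, c0, c1, q1]
    have h1 : (j = 1) ↔ (j' = 1) := by rw [← p2, c1, c2, q2]
    have h2 : (j = 2) ↔ (j' = 2) := by rw [← p3, c2, c3, q3]
    have hjj : j = j' := by fin_cases j <;> fin_cases j' <;> simp_all
    rw [Subtype.ext himg, hjj]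
  · obtain ⟨p1, p2, p3⟩ := tup_pat_mid s j
    obtain ⟨q1, q2, q3⟩ := tup_pat_inr s'
    fin_cases j <;>
      [exact absurd (p3.1 (c2.trans (q3.trans c3.symm))) (by decide);
       exact absurd (p1.1 (c0.trans (q1.trans c1.symm))) (by decide);
       exact absurd (p1.1 (c0.trans (q1.trans c1.symm))) (by decide)]
  · obtain ⟨p1, p2, p3⟩ := tup_pat_inr s
    obtain ⟨q1, q2, q3⟩ := tup_pat_inl s'
    exact absurd ((c0.symm.trans p1).trans c1) q1
  · obtain ⟨p1, p2, p3⟩ := tup_pat_inr s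
    obtain ⟨q1, q2, q3⟩ := tup_pat_mid s' j'
    fin_cases j' <;>
      [exact absurd (q3.1 (c2.symm.trans (p3.trans c3))) (by decide);
       exact absurd (q1.1 (c0.symm.trans (p1.trans c1))) (by decide);
       exact absurd (q1.1 (c0.symm.trans (p1.trans c1))) (by decide)]
  · rw [image_tup_inr, image_tup_inr] at himg
    rw [Subtype.ext himg]

noncomputable def md {N : ℕ} (p q : Sym2 (Fin N)) : Sym2 (Fin N) →₀ ℕ :=
  Finsupp.single p 1 + Finsupp.single q 1

theorem md_eq {N : ℕ} {p q r u : Sym2 (Fin N)} :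
    md p q = md r u ↔ (p = r ∧ q = u) ∨ (p = u ∧ q = r) := by
  rw [md, md, Finsupp.single_add_single_eq_single_add_single one_ne_zero one_ne_zero]
  simp

theorem X_mul_X {K : Type*} [Field K] {N : ℕ} (p q : Sym2 (Fin N)) :
    (X p * X q : MvPolynomial (Sym2 (Fin N)) K) = monomial (md p q) 1 := by
  rw [X, X, monomial_mul, one_mul, md]

noncomputable def mu {N : ℕ} (f : Fin 4 → Fin N) : Sym2 (Fin N) →₀ ℕ :=
  if f 1 = f 2 then md (Sym2.mk (f 0) (f 3)) (Sym2.mk (f 1) (f 2))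
  else md (Sym2.mk (f 0) (f 1)) (Sym2.mk (f 2) (f 3))

theorem coeff_mu_Sqf (K : Type*) [Field K] (n : ℕ) (f g : Fin 4 → Fin (n + 1))
    (hf : Adm f) (hg : Adm g) :
    coeff (mu f) (Sqf K n g) = if g = f then 1 else 0 := by
  obtain ⟨hf01, hf12, hf23, hf02, hf13⟩ := hf
  obtain ⟨hg01, hg12, hg23, hg02, hg13⟩ := hg
  have hS : Sqf K n g =
      monomial (md (Sym2.mk (g 0) (g 1)) (Sym2.mk (g 2) (g 3))) 1 +
      monomial (md (Sym2.mk (g 0) (g 2)) (Sym2.mk (g 1) (g 3))) 1 +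
      monomial (md (Sym2.mk (g 0) (g 3)) (Sym2.mk (g 1) (g 2))) 1 := by
    rw [Sqf, Sq, X_mul_X, X_mul_X, X_mul_X]
  rw [hS, coeff_add, coeff_add, coeff_monomial, coeff_monomial, coeff_monomial]
  have key1 : md (Sym2.mk (g 0) (g 1)) (Sym2.mk (g 2) (g 3)) = mu f → g = f := by
    intro hc
    rw [mu] at hc
    split_ifs at hc with h12 <;>
      · rw [md_eq] at hc
        simp only [Sym2.eq_iff] at hc
        obtain ⟨h1, h2⟩ | ⟨h1, h2⟩ := hc <;> rcases h1 with ⟨ha, hb⟩ | ⟨ha, hb⟩ <;>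
          rcases h2 with ⟨hc2, hd⟩ | ⟨hc2, hd⟩ <;>
          · have h4 : g 0 = f 0 ∧ g 1 = f 1 ∧ g 2 = f 2 ∧ g 3 = f 3 := by omega
            funext m
            fin_cases m
            · exact h4.1
            · exact h4.2.1
            · exact h4.2.2.1
            · exact h4.2.2.2
  have key2 : md (Sym2.mk (g 0) (g 2)) (Sym2.mk (g 1) (g 3)) = mu f → g = f := by
    intro hc
    rw [mu] at hc
    split_ifs at hc with h12 <;>
      · rw [md_eq] at hc
        simp only [Sym2.eq_iff] at hc
        obtain ⟨h1, h2⟩ | ⟨h1, h2⟩ := hc <;> rcases h1 with ⟨ha, hb⟩ | ⟨ha, hb⟩ <;>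
          rcases h2 with ⟨hc2, hd⟩ | ⟨hc2, hd⟩ <;>
          · have h4 : g 0 = f 0 ∧ g 1 = f 1 ∧ g 2 = f 2 ∧ g 3 = f 3 := by omega
            funext m
            fin_cases m
            · exact h4.1
            · exact h4.2.1
            · exact h4.2.2.1
            · exact h4.2.2.2
  have key3 : md (Sym2.mk (g 0) (g 3)) (Sym2.mk (g 1) (g 2)) = mu f → g = f := by
    intro hc
    rw [mu] at hc
    split_ifs at hc with h12 <;>
      · rw [md_eq] at hc
        simp only [Sym2.eq_iff] at hc
        obtain ⟨h1, h2⟩ | ⟨h1, h2⟩ := hc <;> rcases h1 with ⟨ha, hb⟩ | ⟨ha, hb⟩ <;>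
          rcases h2 with ⟨hc2, hd⟩ | ⟨hc2, hd⟩ <;>
          · have h4 : g 0 = f 0 ∧ g 1 = f 1 ∧ g 2 = f 2 ∧ g 3 = f 3 := by omega
            funext m
            fin_cases m
            · exact h4.1
            · exact h4.2.1
            · exact h4.2.2.1
            · exact h4.2.2.2
  by_cases hgf : g = f
  · subst hgf
    rw [if_pos rfl]
    by_cases h12 : g 1 = g 2
    · rw [mu, if_pos h12]
      rw [if_neg ?c1, if_neg ?c2, if_pos rfl]
      case c1 =>
        intro hc
        rw [md_eq] at hc
        simp only [Sym2.eq_iff] at hc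
        obtain ⟨h1, h2⟩ | ⟨h1, h2⟩ := hc <;> rcases h1 with ⟨ha, hb⟩ | ⟨ha, hb⟩ <;>
          rcases h2 with ⟨hc2, hd⟩ | ⟨hc2, hd⟩ <;> omega
      case c2 =>
        intro hc
        rw [md_eq] at hc
        simp only [Sym2.eq_iff] at hc
        obtain ⟨h1, h2⟩ | ⟨h1, h2⟩ := hc <;> rcases h1 with ⟨ha, hb⟩ | ⟨ha, hb⟩ <;>
          rcases h2 with ⟨hc2, hd⟩ | ⟨hc2, hd⟩ <;> omega
      simp
    · rw [mu, if_neg h12]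
      rw [if_pos rfl, if_neg ?c2, if_neg ?c3]
      case c2 =>
        intro hc
        rw [md_eq] at hc
        simp only [Sym2.eq_iff] at hc
        obtain ⟨h1, h2⟩ | ⟨h1, h2⟩ := hc <;> rcases h1 with ⟨ha, hb⟩ | ⟨ha, hb⟩ <;>
          rcases h2 with ⟨hc2, hd⟩ | ⟨hc2, hd⟩ <;> omega
      case c3 =>
        intro hc
        rw [md_eq] at hc
        simp only [Sym2.eq_iff] at hc
        obtain ⟨h1, h2⟩ | ⟨h1, h2⟩ := hc <;> rcases h1 with ⟨ha, hb⟩ | ⟨ha, hb⟩ <;>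
          rcases h2 with ⟨hc2, hd⟩ | ⟨hc2, hd⟩ <;> omega
      simp
  · rw [if_neg hgf, if_neg (fun hc => hgf (key1 hc)), if_neg (fun hc => hgf (key2 hc)),
      if_neg (fun hc => hgf (key3 hc))]
    simp

section Main
variable (K : Type*) [Field K] [CharP K 3] (n : ℕ)

theorem Sq_mem_W (a b c d : Fin (n + 1)) :
    Sq K n a b c d ∈ Submodule.span K
      (Set.range fun p : (Fin (n + 1) → K) × (Fin (n + 1) → K) => Qst K n p.1 p.2) := by
  have hW : ∀ s t : Fin (n + 1) → K, Qst K n s t ∈ Submodule.span K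
      (Set.range fun p : (Fin (n + 1) → K) × (Fin (n + 1) → K) => Qst K n p.1 p.2) :=
    fun s t => Submodule.subset_span ⟨(s, t), rfl⟩
  have h2 : ∀ i k l : Fin (n + 1), Sq K n i i k l ∈ Submodule.span K
      (Set.range fun p : (Fin (n + 1) → K) × (Fin (n + 1) → K) => Qst K n p.1 p.2) := by
    intro i k l
    rw [Sq_eq2]
    exact sub_mem (sub_mem (Submodule.smul_mem _ _ (hW _ _)) (Submodule.smul_mem _ _ (hW _ _)))
      (Submodule.smul_mem _ _ (hW _ _))
  rw [Sq_comb]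
  exact sub_mem (sub_mem (hW _ _)
      (add_mem (add_mem (add_mem (h2 _ _ _) (h2 _ _ _)) (h2 _ _ _)) (h2 _ _ _)))
    (Submodule.smul_mem _ _
      (add_mem (add_mem (add_mem (h2 _ _ _) (h2 _ _ _)) (h2 _ _ _)) (h2 _ _ _)))

theorem Sq_mem_spanS (a b c d : Fin (n + 1)) :
    Sq K n a b c d ∈ Submodule.span K
      (Set.range fun i : tupIdx (n + 1) => Sqf K n (tup i)) := by
  have hf : Sqf K n ![a, b, c, d] = Sq K n a b c d := rfl
  rw [← hf, ← Sqf_perm K n (Tuple.sort ![a, b, c, d]) ![a, b, c, d]]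
  set g : Fin 4 → Fin (n + 1) := ![a, b, c, d] ∘ ⇑(Tuple.sort ![a, b, c, d]) with hg
  have hmono : Monotone g := Tuple.monotone_sort ![a, b, c, d]
  by_cases h02 : g 0 = g 2
  · have e1 : g 1 = g 0 :=
      le_antisymm ((hmono (show (1:Fin 4) ≤ 2 by decide)).trans_eq h02.symm)
        (hmono (show (0:Fin 4) ≤ 1 by decide))
    have e2 : g 2 = g 0 := h02.symm
    show Sq K n (g 0) (g 1) (g 2) (g 3) ∈ _
    rw [e1, e2, Sq_aaad]
    exact zero_mem _
  · by_cases h13 : g 1 = g 3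
    · have e2 : g 2 = g 1 :=
        le_antisymm ((hmono (show (2:Fin 4) ≤ 3 by decide)).trans_eq h13.symm)
          (hmono (show (1:Fin 4) ≤ 2 by decide))
      have e3 : g 3 = g 1 := h13.symm
      show Sq K n (g 0) (g 1) (g 2) (g 3) ∈ _
      rw [e2, e3, Sq_abbb]
      exact zero_mem _
    · have hadm : Adm g := ⟨hmono (by decide), hmono (by decide), hmono (by decide), h02, h13⟩
      obtain ⟨i, hi⟩ := tup_surj g hadm
      rw [← hi]
      exact Submodule.subset_span ⟨i, rfl⟩

theorem span_eq :
    Submodule.span K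
      (Set.range fun p : (Fin (n + 1) → K) × (Fin (n + 1) → K) => Qst K n p.1 p.2) =
    Submodule.span K (Set.range fun i : tupIdx (n + 1) => Sqf K n (tup i)) := by
  apply le_antisymm
  · rw [Submodule.span_le]
    rintro _ ⟨⟨s, t⟩, rfl⟩
    show Qst K n s t ∈ _
    rw [Qst_master]
    refine Submodule.sum_mem _ fun a _ => Submodule.sum_mem _ fun b _ =>
      Submodule.sum_mem _ fun c _ => Submodule.sum_mem _ fun d _ => ?_
    rw [← smul_eq_C_mul]
    exact Submodule.smul_mem _ _ (Sq_mem_spanS K n a b c d)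
  · rw [Submodule.span_le]
    rintro _ ⟨i, rfl⟩
    exact Sq_mem_W K n _ _ _ _

theorem indepS : LinearIndependent K (fun i : tupIdx (n + 1) => Sqf K n (tup i)) := by
  rw [Fintype.linearIndependent_iff]
  intro l hl i
  have hc := congrArg (coeff (mu (tup i))) hl
  rw [coeff_sum] at hc
  have hterm : ∀ i' : tupIdx (n + 1),
      coeff (mu (tup i)) (l i' • Sqf K n (tup i')) = if i' = i then l i' else 0 := by
    intro i'
    rw [coeff_smul, coeff_mu_Sqf K n (tup i) (tup i') (tup_adm i) (tup_adm i')]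
    by_cases h : i' = i
    · subst h
      rw [if_pos rfl, if_pos rfl, smul_eq_mul, mul_one]
    · rw [if_neg (fun he => h (tup_inj he)), if_neg h, smul_zero]
  rw [Finset.sum_congr rfl (fun i' _ => hterm i')] at hc
  simpa using hc

theorem ch2 : ∀ m : ℕ, Nat.choose (m + 2) 2 * 2 = (m + 2) * (m + 1) := by
  intro m
  induction m with
  | zero => decide
  | succ k ih =>
      rw [show k + 1 + 2 = (k + 2) + 1 from rfl, Nat.choose_succ_succ, add_mul, ih,
        Nat.choose_one_right]
      ring

theorem ch3 : ∀ m : ℕ, Nat.choose (m + 3) 3 * 6 = (m + 3) * (m + 2) * (m + 1) := by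
  intro m
  induction m with
  | zero => decide
  | succ k ih =>
      rw [show k + 1 + 3 = (k + 3) + 1 from rfl, Nat.choose_succ_succ, add_mul, ih]
      have h2 := ch2 (k + 1)
      have e : Nat.choose (k + 3) 2 * 6 = (Nat.choose (k + 3) 2 * 2) * 3 := by ring
      nlinarith [h2]

theorem ch4 : ∀ m : ℕ, Nat.choose (m + 4) 4 * 24 = (m + 4) * (m + 3) * (m + 2) * (m + 1) := by
  intro m
  induction m with
  | zero => decide
  | succ k ih =>
      rw [show k + 1 + 4 = (k + 4) + 1 from rfl, Nat.choose_succ_succ, add_mul, ih]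
      have h3 := ch3 (k + 1)
      nlinarith [h3]

theorem countIdx (m : ℕ) :
    Nat.choose (m + 4) 4 + Nat.choose (m + 4) 3 * 3 + Nat.choose (m + 4) 2 =
      (m + 3) * (m + 4) * ((m + 3) ^ 2 + 9 * (m + 3) + 2) / 24 := by
  refine (Nat.div_eq_of_eq_mul_left (by norm_num) ?_).symm
  have h4 := ch4 m
  have h3 := ch3 (m + 1)
  have h2 := ch2 (m + 2)
  have e : (Nat.choose (m + 4) 4 + Nat.choose (m + 4) 3 * 3 + Nat.choose (m + 4) 2) * 24 =
      Nat.choose (m + 4) 4 * 24 + (Nat.choose (m + 4) 3 * 6) * 12 +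
        (Nat.choose (m + 4) 2 * 2) * 12 := by ring
  rw [show m + 1 + 3 = m + 4 from rfl] at h3
  rw [show m + 2 + 2 = m + 4 from rfl] at h2
  rw [e, h4, h3, h2]
  ring

end Main

/-- Over a field `K` of characteristic `3` and `n ≥ 3`, the span `W` of the quadrics
`Q(s,t)` over all linear forms `s,t` has dimension `n(n+1)(n²+9n+2)/24`. -/
theorem stmt_10 (K : Type*) [Field K] [CharP K 3] (n : ℕ) (hn : 3 ≤ n) :
    Module.finrank K
        (Submodule.span K
          (Set.range fun p : (Fin (n + 1) → K) × (Fin (n + 1) → K) => Qst K n p.1 p.2))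
      = n * (n + 1) * (n ^ 2 + 9 * n + 2) / 24 := by
  rw [span_eq, finrank_span_eq_card (indepS K n)]
  have hcard : Fintype.card (tupIdx (n + 1)) =
      Nat.choose (n + 1) 4 + Nat.choose (n + 1) 3 * 3 + Nat.choose (n + 1) 2 := by
    simp [tupIdx, Fintype.card_sum, Fintype.card_prod, Fintype.card_finset_len,
      Fintype.card_fin]
    ring
  obtain ⟨m, rfl⟩ : ∃ m, n = m + 3 := ⟨n - 3, by omega⟩
  rw [hcard, show m + 3 + 1 = m + 4 from rfl, countIdx]
end

section
/- Let K be a field, n ≥ 1, d ≥ 1. The kernel in degree 2 of the K-algebra map K[z_I : I ∈ A(n,d)] → K[x₀,…,x_n] sending z_I ↦ x^I is spanned, as a K-vector space, by the binomials z_I z_J − z_K z_L with I,J,K,L ∈ A(n,d) and I+J = K+L. -/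
open MvPolynomial

/-- The index set `A(n,d)` of degree-`d` monomials in `n+1` variables. -/
def Amonos (n d : ℕ) : Type := {v : Fin (n + 1) → ℕ // ∑ i, v i = d}

/-- The `K`-algebra map `K[z_I : I ∈ A(n,d)] → K[x₀,…,x_n]`, `z_I ↦ x^I`. -/
noncomputable def veroneseMap (K : Type*) [Field K] (n d : ℕ) :
    MvPolynomial (Amonos n d) K →ₐ[K] MvPolynomial (Fin (n + 1)) K :=
  aeval (fun I : Amonos n d => ∏ i, X i ^ I.1 i)

namespace VeroneseAux

variable {K : Type*} [Field K] {n d : ℕ}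

/-- The exponent finsupp of `x^I`. -/
noncomputable def Ifs (I : Amonos n d) : Fin (n + 1) →₀ ℕ := Finsupp.equivFunOnFinite.symm I.1

lemma Ifs_apply (I : Amonos n d) (i : Fin (n + 1)) : Ifs I i = I.1 i := rfl

/-- Exponent of the image under the Veronese map of the monomial `z^m`. -/
noncomputable def Tmap (m : Amonos n d →₀ ℕ) : Fin (n + 1) →₀ ℕ := m.sum fun I k => k • Ifs I

lemma Tmap_add (m m' : Amonos n d →₀ ℕ) : Tmap (m + m') = Tmap m + Tmap m' :=
  Finsupp.sum_add_index' (fun a => zero_smul _ _) (fun a b₁ b₂ => add_smul _ _ _)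

lemma Tmap_single (I : Amonos n d) (k : ℕ) : Tmap (Finsupp.single I k) = k • Ifs I :=
  Finsupp.sum_single_index (zero_smul _ _)

lemma ver_X (I : Amonos n d) :
    veroneseMap K n d (X I) = monomial (Ifs I) 1 := by
  rw [veroneseMap, aeval_X, ← prod_X_pow_eq_monomial]
  refine (Finset.prod_subset (Finset.subset_univ _) ?_).symm
  intro x _ hx
  rw [← Ifs_apply, Finsupp.notMem_support_iff.mp hx, pow_zero]

lemma ver_monomial (m : Amonos n d →₀ ℕ) (c : K) :
    veroneseMap K n d (monomial m c) = monomial (Tmap m) c := by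
  induction m using Finsupp.induction with
  | zero =>
    have : Tmap (0 : Amonos n d →₀ ℕ) = 0 := Finsupp.sum_zero_index
    rw [this, monomial_zero', monomial_zero', algHom_C, algebraMap_eq]
  | single_add a b f haf hb ih =>
    have h1 : monomial (Finsupp.single a b + f) c
        = monomial (Finsupp.single a b) (1 : K) * monomial f c := by
      rw [monomial_mul, one_mul]
    rw [h1, map_mul, ih, ← X_pow_eq_monomial, map_pow, ver_X, monomial_pow, one_pow,
      monomial_mul, one_mul, Tmap_add, Tmap_single]

lemma coeff_ver (q : MvPolynomial (Amonos n d) K) (e : Fin (n + 1) →₀ ℕ) :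
    coeff e (veroneseMap K n d q)
      = ∑ m ∈ q.support, (if Tmap m = e then coeff m q else 0) := by
  conv_lhs => rw [← support_sum_monomial_coeff q]
  rw [map_sum, coeff_sum]
  refine Finset.sum_congr rfl fun m _ => ?_
  rw [ver_monomial, coeff_monomial]

lemma eq_single_of_sum_eq_one {α : Type*} (m : α →₀ ℕ) (h : m.sum (fun _ k => k) = 1) :
    ∃ a, m = Finsupp.single a 1 := by
  classical
  have hm0 : m ≠ 0 := by
    intro h0; rw [h0, Finsupp.sum_zero_index] at h; exact one_ne_zero h.symm
  obtain ⟨a, ha⟩ := Finsupp.support_nonempty_iff.mpr hm0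
  refine ⟨a, ?_⟩
  have hsum : ∑ x ∈ m.support, m x = 1 := h
  have ha1 : 1 ≤ m a := Nat.one_le_iff_ne_zero.mpr (Finsupp.mem_support_iff.mp ha)
  ext b
  by_cases hb : b = a
  · subst hb
    have hle : m b ≤ 1 := hsum ▸ Finset.single_le_sum (fun _ _ => Nat.zero_le _) ha
    rw [Finsupp.single_eq_same]
    omega
  · rw [Finsupp.single_eq_of_ne' (Ne.symm hb)]
    by_contra hb0
    have hbs : b ∈ m.support := Finsupp.mem_support_iff.mpr hb0
    have has : a ∈ m.support.erase b := Finset.mem_erase.mpr ⟨Ne.symm hb, ha⟩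
    have h2 : m b + m a ≤ ∑ x ∈ m.support, m x := by
      rw [← Finset.add_sum_erase _ _ hbs]
      exact Nat.add_le_add_left (Finset.single_le_sum (fun _ _ => Nat.zero_le _) has) _
    omega

lemma exists_pair_of_sum_eq_two {α : Type*} (m : α →₀ ℕ) (h : m.sum (fun _ k => k) = 2) :
    ∃ I J, m = Finsupp.single I 1 + Finsupp.single J 1 := by
  classical
  have hm0 : m ≠ 0 := by
    intro h0; rw [h0, Finsupp.sum_zero_index] at h; omega
  obtain ⟨I, hI⟩ := Finsupp.support_nonempty_iff.mpr hm0
  have hI1 : 1 ≤ m I := Nat.one_le_iff_ne_zero.mpr (Finsupp.mem_support_iff.mp hI)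
  set m' : α →₀ ℕ := m - Finsupp.single I 1 with hm'
  have hsplit : m = Finsupp.single I 1 + m' := by
    ext b
    rw [Finsupp.add_apply, hm', Finsupp.tsub_apply]
    by_cases hb : b = I
    · subst hb; rw [Finsupp.single_eq_same]; omega
    · rw [Finsupp.single_eq_of_ne' (Ne.symm hb)]; omega
  have hsum' : m'.sum (fun _ k => k) = 1 := by
    have := h
    rw [hsplit, Finsupp.sum_add_index' (fun _ => rfl) (fun _ _ _ => rfl),
      Finsupp.sum_single_index rfl] at this
    omega
  obtain ⟨J, hJ⟩ := eq_single_of_sum_eq_one m' hsum'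
  exact ⟨I, J, by rw [hsplit, hJ]⟩

lemma X_mul_X (I J : Amonos n d) :
    (X I * X J : MvPolynomial (Amonos n d) K)
      = monomial (Finsupp.single I 1 + Finsupp.single J 1) 1 := by
  rw [X, X, monomial_mul, one_mul]

lemma Ifs_sums_eq {I J L M : Amonos n d} (h : Ifs I + Ifs J = Ifs L + Ifs M) :
    I.1 + J.1 = L.1 + M.1 := by
  funext i
  have := DFunLike.congr_fun h i
  rw [Finsupp.add_apply, Finsupp.add_apply, Ifs_apply, Ifs_apply, Ifs_apply, Ifs_apply] at this
  exact this

lemma ver_binomial (I J L M : Amonos n d) (h : I.1 + J.1 = L.1 + M.1) :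
    veroneseMap K n d (X I * X J - X L * X M) = 0 := by
  rw [map_sub, map_mul, map_mul, ver_X, ver_X, ver_X, ver_X, monomial_mul, monomial_mul]
  have he : Ifs I + Ifs J = Ifs L + Ifs M := by
    ext i
    rw [Finsupp.add_apply, Finsupp.add_apply, Ifs_apply, Ifs_apply, Ifs_apply, Ifs_apply]
    exact congrFun h i
  rw [he, sub_self]

lemma binomial_homogeneous (I J L M : Amonos n d) :
    (X I * X J - X L * X M : MvPolynomial (Amonos n d) K).IsHomogeneous 2 :=
  ((isHomogeneous_X K I).mul (isHomogeneous_X K J)).sub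
    ((isHomogeneous_X K L).mul (isHomogeneous_X K M))

lemma degree_two (q : MvPolynomial (Amonos n d) K) (hhom : q.IsHomogeneous 2)
    {m : Amonos n d →₀ ℕ} (hm : m ∈ q.support) : m.sum (fun _ k => k) = 2 := by
  have := hhom (mem_support_iff.mp hm)
  simpa [Finsupp.weight_apply, Finsupp.sum, Pi.one_apply, smul_eq_mul, mul_one] using this

lemma key (N : ℕ) : ∀ q : MvPolynomial (Amonos n d) K, q.support.card ≤ N →
    veroneseMap K n d q = 0 → q.IsHomogeneous 2 →
    q ∈ Submodule.span K
        {q : MvPolynomial (Amonos n d) K |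
          ∃ I J L M : Amonos n d, I.1 + J.1 = L.1 + M.1 ∧ q = X I * X J - X L * X M} := by
  induction N with
  | zero =>
    intro q hq _ _
    have : q = 0 := by rwa [Nat.le_zero, Finset.card_eq_zero, support_eq_empty] at hq
    simp [this]
  | succ N ih =>
    intro q hcard hker hhom
    classical
    by_cases hq0 : q = 0
    · simp [hq0]
    obtain ⟨m, hm⟩ := support_nonempty.mpr hq0
    set c := coeff m q with hc
    have hc0 : c ≠ 0 := mem_support_iff.mp hm
    have hFsum : ∑ m' ∈ q.support, (if Tmap m' = Tmap m then coeff m' q else 0) = 0 := by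
      have h1 := coeff_ver q (Tmap m)
      rw [hker, coeff_zero] at h1
      exact h1.symm
    have hexists : ∃ m', m' ∈ q.support ∧ Tmap m' = Tmap m ∧ m' ≠ m := by
      by_contra hcon
      push_neg at hcon
      have : ∑ m' ∈ q.support, (if Tmap m' = Tmap m then coeff m' q else 0) = coeff m q := by
        rw [Finset.sum_eq_single_of_mem m hm
          (fun b hb hbm => if_neg (fun hT => hbm (hcon b hb hT))), if_pos rfl]
      rw [this] at hFsum
      exact hc0 hFsum
    obtain ⟨m', hm's, hTm', hne⟩ := hexists
    obtain ⟨I, J, hIJ⟩ := exists_pair_of_sum_eq_two m (degree_two q hhom hm)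
    obtain ⟨L, M, hLM⟩ := exists_pair_of_sum_eq_two m' (degree_two q hhom hm's)
    have hTIJ : Tmap m = Ifs I + Ifs J := by
      rw [hIJ, Tmap_add, Tmap_single, Tmap_single, one_smul, one_smul]
    have hTLM : Tmap m' = Ifs L + Ifs M := by
      rw [hLM, Tmap_add, Tmap_single, Tmap_single, one_smul, one_smul]
    have hsum : I.1 + J.1 = L.1 + M.1 :=
      Ifs_sums_eq (by rw [← hTIJ, ← hTLM, hTm'])
    set b : MvPolynomial (Amonos n d) K := X I * X J - X L * X M with hbdef
    have hbset : b ∈ {q : MvPolynomial (Amonos n d) K |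
        ∃ I J L M : Amonos n d, I.1 + J.1 = L.1 + M.1 ∧ q = X I * X J - X L * X M} :=
      ⟨I, J, L, M, hsum, rfl⟩
    set q' := q - c • b with hq'def
    have hkerb : veroneseMap K n d b = 0 := ver_binomial I J L M hsum
    have hker' : veroneseMap K n d q' = 0 := by
      rw [hq'def, map_sub, hker, map_smul, hkerb, smul_zero, sub_zero]
    have hhom' : q'.IsHomogeneous 2 := by
      have hb2 : (c • b).IsHomogeneous 2 := by
        rw [← mem_homogeneousSubmodule] at *
        exact Submodule.smul_mem _ c (binomial_homogeneous I J L M)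
      exact hhom.sub hb2
    have hbX : b = monomial m 1 - monomial m' 1 := by
      rw [hbdef, X_mul_X, X_mul_X, ← hIJ, ← hLM]
    have hcoeffb : ∀ x, coeff x b = (if m = x then (1 : K) else 0) - (if m' = x then 1 else 0) := by
      intro x
      rw [hbX, coeff_sub, coeff_monomial, coeff_monomial]
    have hsupp : q'.support ⊆ q.support.erase m := by
      intro x hx
      rw [mem_support_iff] at hx
      rw [Finset.mem_erase]
      constructor
      · rintro rfl
        apply hx
        rw [hq'def, coeff_sub, coeff_smul, hcoeffb, if_pos rfl, if_neg hne, ← hc]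
        simp
      · by_contra hxs
        apply hx
        have hxm : x ≠ m := fun h => hxs (h ▸ hm)
        have hxm' : x ≠ m' := fun h => hxs (h ▸ hm's)
        rw [hq'def, coeff_sub, coeff_smul, hcoeffb, if_neg (Ne.symm hxm), if_neg (Ne.symm hxm')]
        have : coeff x q = 0 := by
          by_contra h0
          exact hxs (mem_support_iff.mpr h0)
        rw [this]
        simp
    have hcard' : q'.support.card ≤ N := by
      have h1 : (q.support.erase m).card = q.support.card - 1 :=
        Finset.card_erase_of_mem hm
      have h2 := Finset.card_le_card hsupp
      have h3 : 1 ≤ q.support.card := Finset.card_pos.mpr ⟨m, hm⟩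
      omega
    have hq'mem := ih q' hcard' hker' hhom'
    have hqeq : q = q' + c • b := by rw [hq'def, sub_add_cancel]
    rw [hqeq]
    exact Submodule.add_mem _ hq'mem
      (Submodule.smul_mem _ _ (Submodule.subset_span hbset))

end VeroneseAux

/-- The degree-2 part of the kernel of `z_I ↦ x^I` is spanned over `K` by the binomials
`z_I z_J − z_K z_L` with `I+J = K+L`. -/
theorem stmt_12 (K : Type*) [Field K] (n d : ℕ) (hn : 1 ≤ n) (hd : 1 ≤ d) :
    Submodule.span K
        {q : MvPolynomial (Amonos n d) K | veroneseMap K n d q = 0 ∧ q.IsHomogeneous 2}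
      = Submodule.span K
        {q : MvPolynomial (Amonos n d) K |
          ∃ I J L M : Amonos n d, I.1 + J.1 = L.1 + M.1 ∧ q = X I * X J - X L * X M} := by
  apply le_antisymm
  · rw [Submodule.span_le]
    rintro q ⟨hker, hhom⟩
    exact VeroneseAux.key q.support.card q le_rfl hker hhom
  · rw [Submodule.span_le]
    rintro q ⟨I, J, L, M, h, rfl⟩
    exact Submodule.subset_span
      ⟨VeroneseAux.ver_binomial I J L M h, VeroneseAux.binomial_homogeneous I J L M⟩
end

section
/- Let K be an integral domain and s, t, h ∈ K[x₀,…,x_n] homogeneous polynomials with h ≠ 0. Then the element (s⊗s·h) ⊙ (t⊗t·h) − (s·t·h) ⊙ (s·t·h) of the symmetric square Sym²(K[x]_{2a+b}) (where deg s = deg t = a, deg h = b) is zero if and only if s and t are K-linearly dependent. Equivalently: the quadratic polynomial Q := Z₁Z₂ − Z₃² vanishes identically under the substitution Z₁ = s²h, Z₂ = t²h, Z₃ = sth (always), while the corresponding element s²h ⊙ t²h − sth ⊙ sth of the divided/symmetric square of the space of forms of degree 2a+b is nonzero precisely when {s,t} is linearly independent. -/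
open MvPolynomial TensorProduct

/-- Let `K` be an integral domain (with `2 ≠ 0`, as in the blanket `char ≠ 2`
assumption), and let `s, t, h` be homogeneous polynomials of degrees `a, a, b` with
`h ≠ 0`. Then the quadric relation `(s²h)(t²h) = (sth)²` always holds, while the
element `s²h ⊙ t²h − sth ⊙ sth` of the symmetric square (here expressed in the tensor
square: `s²h ⊗ t²h + t²h ⊗ s²h − 2·(sth ⊗ sth)`) vanishes if and only if `s` and `t`
are `K`-linearly dependent. -/
theorem stmt_14 (K : Type*) [CommRing K] [IsDomain K] (h2 : (2 : K) ≠ 0)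
    (n a b : ℕ) (s t h : MvPolynomial (Fin (n + 1)) K)
    (hs : s.IsHomogeneous a) (ht : t.IsHomogeneous a) (hh : h.IsHomogeneous b)
    (hne : h ≠ 0) :
    (s ^ 2 * h) * (t ^ 2 * h) = (s * t * h) ^ 2 ∧
    (((s ^ 2 * h) ⊗ₜ[K] (t ^ 2 * h) + (t ^ 2 * h) ⊗ₜ[K] (s ^ 2 * h)
        = (2 : K) • ((s * t * h) ⊗ₜ[K] (s * t * h)))
      ↔ ¬ LinearIndependent K ![s, t]) := by
  refine ⟨by ring, ?_, ?_⟩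
  · -- forward direction: tensor relation ⇒ dependence
    intro hEq
    set x : MvPolynomial (Fin (n + 1)) K := s ^ 2 * h with hxdef
    set y : MvPolynomial (Fin (n + 1)) K := t ^ 2 * h with hydef
    set z : MvPolynomial (Fin (n + 1)) K := s * t * h with hzdef
    by_contra hli
    have hs0 : s ≠ 0 := by simpa using hli.ne_zero 0
    have ht0 : t ≠ 0 := by simpa using hli.ne_zero 1
    -- coefficient relations
    set B := basisMonomials (Fin (n + 1)) K with hB
    have H : ∀ i j : Fin (n + 1) →₀ ℕ,
        x.coeff i * y.coeff j + y.coeff i * x.coeff j = 2 * (z.coeff i * z.coeff j) := by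
      intro i j
      have h0 := congrArg (fun w => ((B.tensorProduct B).repr w) (i, j)) hEq
      simp only [map_add, Finsupp.add_apply, map_smul, Finsupp.smul_apply,
        Module.Basis.tensorProduct_repr_tmul_apply, smul_eq_mul] at h0
      have h1 : y.coeff j * x.coeff i + x.coeff j * y.coeff i
          = 2 * (z.coeff j * z.coeff i) := h0
      linear_combination h1
    have hsq : ∀ i, z.coeff i * z.coeff i = x.coeff i * y.coeff i := by
      intro i
      apply mul_left_cancel₀ h2
      linear_combination -(H i i)
    have hcross : ∀ i j, x.coeff i * y.coeff j = x.coeff j * y.coeff i := by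
      intro i j
      have h0 : (x.coeff i * y.coeff j - x.coeff j * y.coeff i) ^ 2 = 0 := by
        linear_combination (x.coeff i * y.coeff j + y.coeff i * x.coeff j
            + 2 * (z.coeff i * z.coeff j)) * (H i j)
          + 4 * (z.coeff j * z.coeff j) * (hsq i)
          + 4 * (x.coeff i * y.coeff i) * (hsq j)
      have h1 := pow_eq_zero_iff (n := 2) (by norm_num) |>.mp h0
      linear_combination h1
    have hx0 : x ≠ 0 := mul_ne_zero (pow_ne_zero _ hs0) hne
    obtain ⟨i0, hi0⟩ := MvPolynomial.ne_zero_iff.mp hx0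
    by_cases hz0 : z.coeff i0 = 0
    · -- then y = 0, contradiction
      have hy0 : y.coeff i0 = 0 := by
        have h1 := hsq i0
        rw [hz0, mul_zero] at h1
        rcases mul_eq_zero.mp h1.symm with h' | h'
        · exact absurd h' hi0
        · exact h'
      have hy : y = 0 := by
        apply MvPolynomial.ext
        intro j
        have h1 := hcross i0 j
        rw [hy0, mul_zero] at h1
        rcases mul_eq_zero.mp h1 with h' | h'
        · exact absurd h' hi0
        · simpa using h'
      have h1 : t ^ 2 = 0 := by
        rcases mul_eq_zero.mp hy with h' | h'
        · exact h'
        · exact absurd h' hne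
      exact ht0 (pow_eq_zero_iff (n := 2) (by norm_num) |>.mp h1)
    · -- z.coeff i0 ≠ 0 : get a genuine linear relation between s and t
      have hlin : ∀ j, z.coeff i0 * z.coeff j = x.coeff i0 * y.coeff j := by
        intro j
        apply mul_left_cancel₀ h2
        linear_combination -(H i0 j) - hcross i0 j
      have claim : ∀ j, z.coeff i0 * y.coeff j = y.coeff i0 * z.coeff j := by
        intro j
        apply mul_left_cancel₀ hz0
        linear_combination y.coeff j * (hsq i0) - y.coeff i0 * (hlin j)
      have hpoly : C (z.coeff i0) * y = C (y.coeff i0) * z := by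
        apply MvPolynomial.ext
        intro j
        rw [coeff_C_mul, coeff_C_mul]
        exact claim j
      have hpoly2 : C (z.coeff i0) * t ^ 2 = C (y.coeff i0) * (s * t) := by
        apply mul_right_cancel₀ hne
        calc C (z.coeff i0) * t ^ 2 * h = C (z.coeff i0) * y := by rw [hydef]; ring
          _ = C (y.coeff i0) * z := hpoly
          _ = C (y.coeff i0) * (s * t) * h := by rw [hzdef]; ring
      have hpoly3 : C (z.coeff i0) * t = C (y.coeff i0) * s := by
        apply mul_right_cancel₀ ht0
        calc C (z.coeff i0) * t * t = C (z.coeff i0) * t ^ 2 := by ring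
          _ = C (y.coeff i0) * (s * t) := hpoly2
          _ = C (y.coeff i0) * s * t := by ring
      exact hz0 ((LinearIndependent.pair_iff.mp hli (-(y.coeff i0)) (z.coeff i0)
        (by rw [smul_eq_C_mul, smul_eq_C_mul, map_neg]
            linear_combination hpoly3)).2)
  · -- backward direction: dependence ⇒ tensor relation
    intro hdep
    rw [LinearIndependent.pair_iff] at hdep
    push_neg at hdep
    obtain ⟨c, d, hcd, hne'⟩ := hdep
    by_cases hc : c = 0
    · have hd : d ≠ 0 := hne' hc
      have ht0 : t = 0 := by
        rw [hc, zero_smul, zero_add, smul_eq_C_mul] at hcd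
        rcases mul_eq_zero.mp hcd with h' | h'
        · exact absurd (by simpa using h' : d = 0) hd
        · exact h'
      simp [ht0]
    · by_cases hd : d = 0
      · have hs0 : s = 0 := by
          rw [hd, zero_smul, add_zero, smul_eq_C_mul] at hcd
          rcases mul_eq_zero.mp hcd with h' | h'
          · exact absurd (by simpa using h' : c = 0) hc
          · exact h'
        simp [hs0]
      · -- generic case: c ≠ 0, d ≠ 0
        have hcs : C c * s + C d * t = 0 := by
          rw [← smul_eq_C_mul, ← smul_eq_C_mul]; exact hcd
        have hx : (c ^ 2 : K) • (s ^ 2 * h) = (d ^ 2 : K) • (t ^ 2 * h) := by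
          rw [smul_eq_C_mul, smul_eq_C_mul, map_pow, map_pow]
          linear_combination ((C c * s - C d * t) * h) * hcs
        have hz : ((c * d : K)) • (s * t * h) = -((c ^ 2 : K) • (s ^ 2 * h)) := by
          rw [smul_eq_C_mul, smul_eq_C_mul, map_mul, map_pow]
          linear_combination (C c * s * h) * hcs
        have hcd2 : (c ^ 2 * d ^ 2 : K) ≠ 0 :=
          mul_ne_zero (pow_ne_zero _ hc) (pow_ne_zero _ hd)
        have hz' : -((c * d : K) • (s * t * h)) = (c ^ 2 : K) • (s ^ 2 * h) := by
          rw [hz, neg_neg]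
        have e1 : (c ^ 2 * d ^ 2 : K) • ((s ^ 2 * h) ⊗ₜ[K] (t ^ 2 * h))
            = ((c ^ 2 : K) • (s ^ 2 * h)) ⊗ₜ[K] ((c ^ 2 : K) • (s ^ 2 * h)) := by
          nth_rewrite 2 [hx]
          rw [smul_tmul_smul]
        have e2 : (c ^ 2 * d ^ 2 : K) • ((t ^ 2 * h) ⊗ₜ[K] (s ^ 2 * h))
            = ((c ^ 2 : K) • (s ^ 2 * h)) ⊗ₜ[K] ((c ^ 2 : K) • (s ^ 2 * h)) := by
          nth_rewrite 1 [hx]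
          rw [smul_tmul_smul, mul_comm (d ^ 2 : K) (c ^ 2 : K)]
        have e3 : (c ^ 2 * d ^ 2 : K) • ((s * t * h) ⊗ₜ[K] (s * t * h))
            = ((c ^ 2 : K) • (s ^ 2 * h)) ⊗ₜ[K] ((c ^ 2 : K) • (s ^ 2 * h)) := by
          have hrw : (c ^ 2 * d ^ 2 : K) = (c * d) * (c * d) := by ring
          rw [hrw, ← hz', neg_tmul, tmul_neg, neg_neg, smul_tmul_smul]
        -- cancel the scalar via the basis representation
        set B := basisMonomials (Fin (n + 1)) K with hB
        have hsuf : (c ^ 2 * d ^ 2 : K) •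
              ((s ^ 2 * h) ⊗ₜ[K] (t ^ 2 * h) + (t ^ 2 * h) ⊗ₜ[K] (s ^ 2 * h))
            = (c ^ 2 * d ^ 2 : K) • ((2 : K) • ((s * t * h) ⊗ₜ[K] (s * t * h))) := by
          rw [smul_add, e1, e2, smul_comm, e3, two_smul]
        apply (B.tensorProduct B).repr.injective
        apply Finsupp.ext
        intro p
        have h' := congrArg (fun w => ((B.tensorProduct B).repr w) p) hsuf
        simp only [map_smul, Finsupp.smul_apply, smul_eq_mul] at h' ⊢
        exact mul_left_cancel₀ hcd2 h'
end

section
/- Let K be a field of characteristic 3 and d ≥ 3. In K[z_I : I ∈ A(n,d)], for any M, N ∈ A(n,d−2) and indices i, j, k ∈ {0,…,n}, the binomial combination (z_{2e_i+M}·z_{e_j+e_k+N} + z_{e_j+e_k+M}·z_{2e_i+N}) − (z_{e_i+e_j+M}·z_{e_i+e_k+N} + z_{e_i+e_k+M}·z_{e_i+e_j+N}) can be written as a K-linear combination of quadrics of the form φ(s²h)φ(t²h) − φ(sth)², where s,t are linear forms, h is a form of degree d−2 in K[x₀,…,x_n], and φ : K[x]_d → ⟨z_I⟩_K is the isomorphism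 x^I ↦ z_I. -/
open MvPolynomial

/-- The linear identification `φ : x^I ↦ z_I` from polynomials in `x₀,…,x_n` to linear
forms in the variables `z_I` (indexed by exponent vectors). -/
noncomputable def phiV (K : Type*) [Field K] (n : ℕ) (p : MvPolynomial (Fin (n + 1)) K) :
    MvPolynomial (Fin (n + 1) →₀ ℕ) K :=
  ∑ I ∈ p.support, C (p.coeff I) * X I

lemma phiV_eq_mapDomain (K : Type*) [Field K] (n : ℕ) (p : MvPolynomial (Fin (n + 1)) K) :
    phiV K n p = AddMonoidAlgebra.mapDomain (fun I => Finsupp.single I 1) p := by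
  unfold phiV
  conv_rhs => rw [as_sum p]
  rw [show ∀ q : MvPolynomial (Fin (n + 1)) K, AddMonoidAlgebra.mapDomain (fun I => Finsupp.single I 1) q
    = AddMonoidAlgebra.mapDomainLinearMap K K (fun I : Fin (n + 1) →₀ ℕ => Finsupp.single I 1) q
    from fun _ => rfl, map_sum]
  refine Finset.sum_congr rfl fun I _ => ?_
  rw [C_mul_X_eq_monomial, ← single_eq_monomial, ← single_eq_monomial]
  exact (AddMonoidAlgebra.mapDomain_single (R := K) (f := fun I : Fin (n + 1) →₀ ℕ => Finsupp.single I 1)).symm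

lemma phiV_add (K : Type*) [Field K] (n : ℕ) (p q : MvPolynomial (Fin (n + 1)) K) :
    phiV K n (p + q) = phiV K n p + phiV K n q := by
  simp only [phiV_eq_mapDomain]
  exact AddMonoidAlgebra.mapDomain_add _ _ _

lemma phiV_monomial (K : Type*) [Field K] (n : ℕ) (I : Fin (n + 1) →₀ ℕ) (c : K) :
    phiV K n (monomial I c) = monomial (Finsupp.single I 1) c := by
  rw [phiV_eq_mapDomain, ← single_eq_monomial, ← single_eq_monomial]
  exact AddMonoidAlgebra.mapDomain_single

lemma X_eq_mono_fin (K : Type*) [Field K] (n : ℕ) (i : Fin (n + 1)) :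
    (X i : MvPolynomial (Fin (n + 1)) K) = monomial (Finsupp.single i 1) 1 := rfl

lemma mono_one_eq_X {σ R : Type*} [CommSemiring R] (s : σ) :
    monomial (Finsupp.single s 1) (1 : R) = X s := rfl


/-- Over a field `K` of characteristic 3 and `d ≥ 3`: for any `M, N ∈ A(n,d−2)` and any
indices `i,j,k`, the combination
`(z_{2e_i+M}·z_{e_j+e_k+N} + z_{e_j+e_k+M}·z_{2e_i+N}) −
 (z_{e_i+e_j+M}·z_{e_i+e_k+N} + z_{e_i+e_k+M}·z_{e_i+e_j+N})`
is a `K`-linear combination of the rank-3 quadrics `φ(s²h)φ(t²h) − φ(sth)²` with `s,t`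
linear forms and `h` a form of degree `d−2`. -/
theorem stmt_18 (K : Type*) [Field K] [CharP K 3] (n d : ℕ) (hd : 3 ≤ d)
    (M N : Fin (n + 1) →₀ ℕ) (hM : ∑ i, M i = d - 2) (hN : ∑ i, N i = d - 2)
    (i j k : Fin (n + 1)) :
    (X (Finsupp.single i 2 + M) * X (Finsupp.single j 1 + Finsupp.single k 1 + N)
        + X (Finsupp.single j 1 + Finsupp.single k 1 + M) * X (Finsupp.single i 2 + N))
      - (X (Finsupp.single i 1 + Finsupp.single j 1 + M) *
            X (Finsupp.single i 1 + Finsupp.single k 1 + N)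
          + X (Finsupp.single i 1 + Finsupp.single k 1 + M) *
            X (Finsupp.single i 1 + Finsupp.single j 1 + N))
      ∈ Submodule.span K
          {q : MvPolynomial (Fin (n + 1) →₀ ℕ) K |
            ∃ s t h : MvPolynomial (Fin (n + 1)) K,
              s.IsHomogeneous 1 ∧ t.IsHomogeneous 1 ∧ h.IsHomogeneous (d - 2) ∧
                q = phiV K n (s ^ 2 * h) * phiV K n (t ^ 2 * h)
                      - (phiV K n (s * t * h)) ^ 2} := by
  classical
  -- the degree-(d-2) monomials
  set m : MvPolynomial (Fin (n + 1)) K := monomial M 1 with hm_def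
  set nn : MvPolynomial (Fin (n + 1)) K := monomial N 1 with hnn_def
  have hdegM : M.degree = d - 2 := by
    rw [Finsupp.degree, ← hM]
    exact Finset.sum_subset (Finset.subset_univ _)
      (fun x _ hx => Finsupp.notMem_support_iff.mp hx)
  have hdegN : N.degree = d - 2 := by
    rw [Finsupp.degree, ← hN]
    exact Finset.sum_subset (Finset.subset_univ _)
      (fun x _ hx => Finsupp.notMem_support_iff.mp hx)
  have hhm : m.IsHomogeneous (d - 2) := isHomogeneous_monomial _ hdegM
  have hhn : nn.IsHomogeneous (d - 2) := isHomogeneous_monomial _ hdegN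
  have hhmn : (m + nn).IsHomogeneous (d - 2) := hhm.add hhn
  have hsi : (X i : MvPolynomial (Fin (n + 1)) K).IsHomogeneous 1 := isHomogeneous_X _ _
  have hsj : (X j : MvPolynomial (Fin (n + 1)) K).IsHomogeneous 1 := isHomogeneous_X _ _
  have hsk : (X k : MvPolynomial (Fin (n + 1)) K).IsHomogeneous 1 := isHomogeneous_X _ _
  have hsjk : (X j + X k : MvPolynomial (Fin (n + 1)) K).IsHomogeneous 1 := hsj.add hsk
  have mem : ∀ s t h : MvPolynomial (Fin (n + 1)) K, s.IsHomogeneous 1 → t.IsHomogeneous 1 →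
      h.IsHomogeneous (d - 2) →
      phiV K n (s ^ 2 * h) * phiV K n (t ^ 2 * h) - (phiV K n (s * t * h)) ^ 2 ∈
        Submodule.span K
          {q : MvPolynomial (Fin (n + 1) →₀ ℕ) K |
            ∃ s t h : MvPolynomial (Fin (n + 1)) K,
              s.IsHomogeneous 1 ∧ t.IsHomogeneous 1 ∧ h.IsHomogeneous (d - 2) ∧
                q = phiV K n (s ^ 2 * h) * phiV K n (t ^ 2 * h)
                      - (phiV K n (s * t * h)) ^ 2} :=
    fun s t h hs ht hh => Submodule.subset_span ⟨s, t, h, hs, ht, hh, rfl⟩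
  set S : MvPolynomial (Fin (n + 1) →₀ ℕ) K :=
    ((phiV K n (X i ^ 2 * (m + nn)) * phiV K n ((X j + X k) ^ 2 * (m + nn))
        - (phiV K n (X i * (X j + X k) * (m + nn))) ^ 2)
      - (phiV K n (X i ^ 2 * m) * phiV K n ((X j + X k) ^ 2 * m)
        - (phiV K n (X i * (X j + X k) * m)) ^ 2)
      - (phiV K n (X i ^ 2 * nn) * phiV K n ((X j + X k) ^ 2 * nn)
        - (phiV K n (X i * (X j + X k) * nn)) ^ 2))
    - ((phiV K n (X i ^ 2 * (m + nn)) * phiV K n (X j ^ 2 * (m + nn))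
        - (phiV K n (X i * X j * (m + nn))) ^ 2)
      - (phiV K n (X i ^ 2 * m) * phiV K n (X j ^ 2 * m)
        - (phiV K n (X i * X j * m)) ^ 2)
      - (phiV K n (X i ^ 2 * nn) * phiV K n (X j ^ 2 * nn)
        - (phiV K n (X i * X j * nn)) ^ 2))
    - ((phiV K n (X i ^ 2 * (m + nn)) * phiV K n (X k ^ 2 * (m + nn))
        - (phiV K n (X i * X k * (m + nn))) ^ 2)
      - (phiV K n (X i ^ 2 * m) * phiV K n (X k ^ 2 * m)
        - (phiV K n (X i * X k * m)) ^ 2)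
      - (phiV K n (X i ^ 2 * nn) * phiV K n (X k ^ 2 * nn)
        - (phiV K n (X i * X k * nn)) ^ 2)) with hS_def
  have hSmem : S ∈ Submodule.span K
      {q : MvPolynomial (Fin (n + 1) →₀ ℕ) K |
        ∃ s t h : MvPolynomial (Fin (n + 1)) K,
          s.IsHomogeneous 1 ∧ t.IsHomogeneous 1 ∧ h.IsHomogeneous (d - 2) ∧
            q = phiV K n (s ^ 2 * h) * phiV K n (t ^ 2 * h)
                  - (phiV K n (s * t * h)) ^ 2} := by
    exact sub_mem (sub_mem
      (sub_mem (sub_mem (mem _ _ _ hsi hsjk hhmn) (mem _ _ _ hsi hsjk hhm))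
        (mem _ _ _ hsi hsjk hhn))
      (sub_mem (sub_mem (mem _ _ _ hsi hsj hhmn) (mem _ _ _ hsi hsj hhm))
        (mem _ _ _ hsi hsj hhn)))
      (sub_mem (sub_mem (mem _ _ _ hsi hsk hhmn) (mem _ _ _ hsi hsk hhm))
        (mem _ _ _ hsi hsk hhn))
  set T : MvPolynomial (Fin (n + 1) →₀ ℕ) K :=
    (X (Finsupp.single i 2 + M) * X (Finsupp.single j 1 + Finsupp.single k 1 + N)
        + X (Finsupp.single j 1 + Finsupp.single k 1 + M) * X (Finsupp.single i 2 + N))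
      - (X (Finsupp.single i 1 + Finsupp.single j 1 + M) *
            X (Finsupp.single i 1 + Finsupp.single k 1 + N)
          + X (Finsupp.single i 1 + Finsupp.single k 1 + M) *
            X (Finsupp.single i 1 + Finsupp.single j 1 + N)) with hT_def
  have hcomm : Finsupp.single k 1 + Finsupp.single j 1
      = Finsupp.single j 1 + Finsupp.single k 1 := add_comm _ _
  have hS2T : S = T + T := by
    rw [hS_def, hT_def, hm_def, hnn_def]
    simp only [sq, mul_add, add_mul, X_eq_mono_fin, monomial_mul, one_mul, mul_one,
      ← Finsupp.single_add, hcomm]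
    simp only [phiV_add, phiV_monomial, mono_one_eq_X]
    ring
  have h3 : T + S = 0 := by
    rw [hS2T]
    have h30 : (3 : K) = 0 := by simpa using CharP.cast_eq_zero K 3
    have : T + (T + T) = (3 : K) • T := by module
    rw [this, h30, zero_smul]
  have hT : T = -S := eq_neg_of_add_eq_zero_left h3
  rw [hT]
  exact neg_mem hSmem
end
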